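/- Let A ∈ ℝ^{m×n} have full column rank and all rows nonzero, and let b ∈ ℝᵐ be such that Ax = b is consistent with unique solution x ∈ ℝⁿ. Let {x_k} be the RK iterates for the system Ax = b with arbitrary initial point x_0 ∈ ℝⁿ. Then for every k ≥ 0: 𝔼‖x_k − x‖² ≤ (1 − σ_min²/‖A‖_F²)^k ‖x_0 − x‖², where σ_min is the smallest singular value of A. -/

import Mathlib

open Matrix

noncomputable section

namespace RK

/-- The Euclidean inner product on `Fin n → ℝ`. -/
def dot {n : ℕ} (v w : Fin n → ℝ) : ℝ := ∑ i, v i * w i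

/-- The squared Euclidean norm on `Fin n → ℝ`. -/
def normSq {n : ℕ} (v : Fin n → ℝ) : ℝ := ∑ i, v i ^ 2

/-- The Euclidean norm on `Fin n → ℝ`. -/
def euclNorm {n : ℕ} (v : Fin n → ℝ) : ℝ := Real.sqrt (normSq v)

/-- The squared Frobenius norm of a matrix. -/
def frobSq {m n : ℕ} (A : Matrix (Fin m) (Fin n) ℝ) : ℝ := ∑ i, ∑ j, A i j ^ 2

/-- One step of the (randomized) Kaczmarz method for the system `A x ≈ b`, using row `i`:
`x ↦ x - ((aᵢᵀ x - bᵢ) / ‖aᵢ‖²) aᵢ`. -/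
def rkStep {m n : ℕ} (A : Matrix (Fin m) (Fin n) ℝ) (b : Fin m → ℝ) (i : Fin m)
    (x : Fin n → ℝ) : Fin n → ℝ :=
  x - ((dot (A i) x - b i) / normSq (A i)) • A i

/-- `rkExp A b x0 k f` is the expectation `𝔼 f(x_k)` of `f` evaluated at the `k`-th iterate of the
randomized Kaczmarz algorithm applied to `A x ≈ b` started at `x0`, where at each step the row
index `i` is drawn independently at random with probability `‖aᵢ‖² / ‖A‖_F²`. -/
def rkExp {m n : ℕ} (A : Matrix (Fin m) (Fin n) ℝ) (b : Fin m → ℝ) (x0 : Fin n → ℝ) :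
    ℕ → ((Fin n → ℝ) → ℝ) → ℝ
  | 0, f => f x0
  | k + 1, f => rkExp A b x0 k fun x => ∑ i, normSq (A i) / frobSq A * f (rkStep A b i x)

/-- The four Penrose conditions: `B` is the Moore–Penrose pseudoinverse of `A`. -/
def IsMoorePenrose {m n : ℕ} (A : Matrix (Fin m) (Fin n) ℝ)
    (B : Matrix (Fin n) (Fin m) ℝ) : Prop :=
  A * B * A = A ∧ B * A * B = B ∧ (A * B)ᵀ = A * B ∧ (B * A)ᵀ = B * A

/-- The row space `range(Aᵀ)` of a matrix `A`. -/
def rowSpace {m n : ℕ} (A : Matrix (Fin m) (Fin n) ℝ) : Set (Fin n → ℝ) :=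
  {v | ∃ u : Fin m → ℝ, v = Aᵀ.mulVec u}

/-- The null space (kernel) of a matrix `A`. -/
def nullSpace {m n : ℕ} (A : Matrix (Fin m) (Fin n) ℝ) : Set (Fin n → ℝ) :=
  {v | A.mulVec v = 0}

/-- `σ` is the smallest nonzero singular value of `A`: `σ > 0`, `σ²` is an eigenvalue of `AᵀA`,
and `σ²` is less than or equal to every nonzero eigenvalue of `AᵀA`. -/
def IsSmallestNonzeroSingularValue {m n : ℕ} (A : Matrix (Fin m) (Fin n) ℝ) (σ : ℝ) : Prop :=
  0 < σ ∧ (∃ v : Fin n → ℝ, v ≠ 0 ∧ (Aᵀ * A).mulVec v = σ ^ 2 • v) ∧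
    ∀ μ : ℝ, μ ≠ 0 → (∃ v : Fin n → ℝ, v ≠ 0 ∧ (Aᵀ * A).mulVec v = μ • v) → σ ^ 2 ≤ μ

/-! ### Auxiliary lemmas -/

lemma normSq_nonneg {n : ℕ} (v : Fin n → ℝ) : 0 ≤ normSq v :=
  Finset.sum_nonneg fun _ _ => sq_nonneg _

lemma normSq_pos {n : ℕ} {v : Fin n → ℝ} (hv : v ≠ 0) : 0 < normSq v := by
  obtain ⟨i, hi⟩ : ∃ i, v i ≠ 0 := by
    by_contra h
    push_neg at h
    exact hv (funext h)
  have h1 : v i ^ 2 ≤ normSq v :=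
    Finset.single_le_sum (fun j _ => sq_nonneg (v j)) (Finset.mem_univ i)
  exact lt_of_lt_of_le (pow_pos (abs_pos.mpr hi) 2 |>.trans_le (by rw [sq_abs])) h1

lemma dot_self {n : ℕ} (v : Fin n → ℝ) : dot v v = normSq v := by
  simp [dot, normSq, sq]

lemma mulVec_apply_eq_dot {m n : ℕ} (A : Matrix (Fin m) (Fin n) ℝ) (v : Fin n → ℝ) (i : Fin m) :
    A.mulVec v i = dot (A i) v := rfl

lemma normSq_mulVec {m n : ℕ} (A : Matrix (Fin m) (Fin n) ℝ) (v : Fin n → ℝ) :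
    normSq (A.mulVec v) = ∑ i, (dot (A i) v) ^ 2 := by
  simp [normSq, mulVec_apply_eq_dot]

lemma frobSq_eq_sum_normSq {m n : ℕ} (A : Matrix (Fin m) (Fin n) ℝ) :
    frobSq A = ∑ i, normSq (A i) := rfl

lemma frobSq_nonneg {m n : ℕ} (A : Matrix (Fin m) (Fin n) ℝ) : 0 ≤ frobSq A := by
  rw [frobSq_eq_sum_normSq]
  exact Finset.sum_nonneg fun i _ => normSq_nonneg _

lemma frobSq_pos {m n : ℕ} {A : Matrix (Fin m) (Fin n) ℝ} (hrows : ∀ i, A i ≠ 0) (hA : A ≠ 0) :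
    0 < frobSq A := by
  rw [frobSq_eq_sum_normSq]
  rcases m with _ | m
  · exact absurd (by ext i j; exact i.elim0) hA
  · calc (0:ℝ) < normSq (A 0) := normSq_pos (hrows 0)
      _ ≤ ∑ i, normSq (A i) :=
        Finset.single_le_sum (fun j _ => normSq_nonneg (A j)) (Finset.mem_univ 0)

lemma dot_sub_right {n : ℕ} (a y x : Fin n → ℝ) : dot a (y - x) = dot a y - dot a x := by
  simp [dot, mul_sub, Finset.sum_sub_distrib]

lemma normSq_sub_smul {n : ℕ} (e a : Fin n → ℝ) (c : ℝ) :
    normSq (e - c • a) = normSq e - 2 * c * dot a e + c ^ 2 * normSq a := by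
  have : ∀ i : Fin n, (e i - c * a i) ^ 2 = e i ^ 2 - 2 * c * (a i * e i) + c ^ 2 * a i ^ 2 := by
    intro i; ring
  simp only [normSq, dot, Pi.sub_apply, Pi.smul_apply, smul_eq_mul]
  rw [Finset.sum_congr rfl fun i _ => this i]
  rw [Finset.sum_add_distrib, Finset.sum_sub_distrib, ← Finset.mul_sum, ← Finset.mul_sum]

/-- The adjoint identity: `⟪Aᵀ u, w⟫ = ⟪u, A w⟫`. -/
lemma dot_transpose_mulVec {m n : ℕ} (A : Matrix (Fin m) (Fin n) ℝ) (u : Fin m → ℝ)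
    (w : Fin n → ℝ) : dot (Aᵀ.mulVec u) w = dot u (A.mulVec w) := by
  simp only [dot, mulVec_apply_eq_dot, dot, transpose_apply, Finset.sum_mul, Finset.mul_sum]
  rw [Finset.sum_comm]
  apply Finset.sum_congr rfl
  intro i _
  apply Finset.sum_congr rfl
  intro j _
  ring

lemma dot_gram {m n : ℕ} (A : Matrix (Fin m) (Fin n) ℝ) (u w : Fin n → ℝ) :
    dot ((Aᵀ * A).mulVec u) w = dot (A.mulVec u) (A.mulVec w) := by
  rw [← Matrix.mulVec_mulVec, dot_transpose_mulVec]

lemma dot_comm {n : ℕ} (v w : Fin n → ℝ) : dot v w = dot w v := by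
  simp [dot, mul_comm]

/-! ### Spectral lower bound -/

lemma spectral_bound {m n : ℕ} (A : Matrix (Fin m) (Fin n) ℝ)
    (hrank : ∀ v : Fin n → ℝ, A.mulVec v = 0 → v = 0)
    (σmin : ℝ) (hσ : IsSmallestNonzeroSingularValue A σmin) (e : Fin n → ℝ) :
    σmin ^ 2 * normSq e ≤ normSq (A.mulVec e) := by
  obtain ⟨hσpos, ⟨v₀, hv₀, _⟩, hmin⟩ := hσ
  by_cases he : e = 0
  · simp [he, normSq, Matrix.mulVec_zero]
  haveI : Nontrivial (EuclideanSpace ℝ (Fin n)) := ⟨⟨WithLp.toLp 2 v₀, 0, by simpa using hv₀⟩⟩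
  -- the symmetric operator `AᵀA` on Euclidean space
  set M : Matrix (Fin n) (Fin n) ℝ := Aᵀ * A with hM
  let T : EuclideanSpace ℝ (Fin n) →ₗ[ℝ] EuclideanSpace ℝ (Fin n) :=
    { toFun := fun w => WithLp.toLp 2 (M.mulVec w)
      map_add' := fun u w => by simp [Matrix.mulVec_add]
      map_smul' := fun c w => by simp [Matrix.mulVec_smul] }
  have hinner : ∀ u w : EuclideanSpace ℝ (Fin n),
      (inner ℝ (T u) w : ℝ) = dot (M.mulVec u) w := by
    intro u w
    simp [PiLp.inner_apply, RCLike.inner_apply, dot, T, mul_comm]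
  have hTsymm : T.IsSymmetric := by
    intro u w
    rw [hinner u w, real_inner_comm, hinner w u, hM, dot_gram, dot_gram, dot_comm]
  have hray := hTsymm.hasEigenvalue_iInf_of_finiteDimensional
  set lam : ℝ := ⨅ x : { x : EuclideanSpace ℝ (Fin n) // x ≠ 0 },
      RCLike.re (inner ℝ (T ↑x) ↑x : ℝ) / ‖(x : EuclideanSpace ℝ (Fin n))‖ ^ 2 with hlam
  obtain ⟨w, hw⟩ := hray.exists_hasEigenvector
  have hweq : M.mulVec w = lam • (w : Fin n → ℝ) := by
    simpa [T] using congrArg WithLp.ofLp hw.apply_eq_smul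
  have hwne : (w : Fin n → ℝ) ≠ 0 := by simpa using hw.right
  -- positivity of lam
  have hq : ∀ u : Fin n → ℝ, dot (M.mulVec u) u = normSq (A.mulVec u) := by
    intro u
    rw [hM, dot_gram, dot_self]
  have hlampos : 0 < lam := by
    have h1 : dot (M.mulVec w) w = lam * normSq (w : Fin n → ℝ) := by
      rw [hweq]
      simp only [dot, normSq, Pi.smul_apply, PiLp.smul_apply, smul_eq_mul, Finset.mul_sum]
      exact Finset.sum_congr rfl fun i _ => by ring
    have h2 : 0 < normSq (A.mulVec (w : Fin n → ℝ)) :=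
      normSq_pos (fun h => hwne (hrank _ h))
    rw [hq] at h1
    have hwpos := normSq_pos hwne
    nlinarith
  have hσlam : σmin ^ 2 ≤ lam :=
    hmin lam (ne_of_gt hlampos) ⟨w, hwne, hweq⟩
  -- the infimum bounds the Rayleigh quotient of e
  have hbdd : BddBelow (Set.range fun x : { x : EuclideanSpace ℝ (Fin n) // x ≠ 0 } =>
      RCLike.re (inner ℝ (T ↑x) ↑x : ℝ) / ‖(x : EuclideanSpace ℝ (Fin n))‖ ^ 2) := by
    refine ⟨0, fun r hr => ?_⟩
    obtain ⟨u, rfl⟩ := hr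
    apply div_nonneg _ (sq_nonneg _)
    have := hinner u u
    simp only [RCLike.re_to_real] at *
    rw [this, hq]
    exact normSq_nonneg _
  have hnormSq : ∀ u : EuclideanSpace ℝ (Fin n), ‖u‖ ^ 2 = normSq (u : Fin n → ℝ) := by
    intro u
    rw [EuclideanSpace.norm_eq, Real.sq_sqrt (Finset.sum_nonneg fun i _ => sq_nonneg _)]
    simp [normSq, Real.norm_eq_abs, sq_abs]
  have hle : lam ≤ normSq (A.mulVec e) / normSq e := by
    have := ciInf_le hbdd (⟨WithLp.toLp 2 e, by simpa using he⟩ :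
      { x : EuclideanSpace ℝ (Fin n) // x ≠ 0 })
    rw [hlam]
    refine this.trans (le_of_eq ?_)
    simp only [RCLike.re_to_real, hinner, hq, hnormSq, WithLp.ofLp_toLp]
  have hepos := normSq_pos he
  calc σmin ^ 2 * normSq e ≤ lam * normSq e := by nlinarith
    _ ≤ normSq (A.mulVec e) := (le_div_iff₀ hepos).mp hle

/-! ### One-step contraction -/

lemma rkStep_sub {m n : ℕ} (A : Matrix (Fin m) (Fin n) ℝ) (b : Fin m → ℝ)
    (x : Fin n → ℝ) (hx : A.mulVec x = b) (i : Fin m) (y : Fin n → ℝ) :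
    rkStep A b i y - x = (y - x) - (dot (A i) (y - x) / normSq (A i)) • A i := by
  have hb : b i = dot (A i) x := by rw [← hx]; rfl
  rw [rkStep, hb, dot_sub_right]
  abel

lemma normSq_rkStep {m n : ℕ} (A : Matrix (Fin m) (Fin n) ℝ) (b : Fin m → ℝ)
    (x : Fin n → ℝ) (hx : A.mulVec x = b) (hrows : ∀ i, A i ≠ 0) (i : Fin m) (y : Fin n → ℝ) :
    normSq (rkStep A b i y - x) =
      normSq (y - x) - (dot (A i) (y - x)) ^ 2 / normSq (A i) := by
  have hs : normSq (A i) ≠ 0 := ne_of_gt (normSq_pos (hrows i))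
  rw [rkStep_sub A b x hx i y, normSq_sub_smul, dot_sub_right, ← dot_sub_right]
  field_simp
  ring

lemma one_step_bound {m n : ℕ} (A : Matrix (Fin m) (Fin n) ℝ) (b : Fin m → ℝ)
    (hA : A ≠ 0) (hrows : ∀ i, A i ≠ 0)
    (hrank : ∀ v : Fin n → ℝ, A.mulVec v = 0 → v = 0)
    (σmin : ℝ) (hσ : IsSmallestNonzeroSingularValue A σmin)
    (x : Fin n → ℝ) (hx : A.mulVec x = b) (y : Fin n → ℝ) :
    ∑ i, normSq (A i) / frobSq A * normSq (rkStep A b i y - x) ≤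
      (1 - σmin ^ 2 / frobSq A) * normSq (y - x) := by
  have hF : 0 < frobSq A := frobSq_pos hrows hA
  have hsum : ∑ i, normSq (A i) / frobSq A * normSq (rkStep A b i y - x) =
      normSq (y - x) - normSq (A.mulVec (y - x)) / frobSq A := by
    have : ∀ i : Fin m, normSq (A i) / frobSq A * normSq (rkStep A b i y - x) =
        normSq (A i) * normSq (y - x) / frobSq A - (dot (A i) (y - x)) ^ 2 / frobSq A := by
      intro i
      rw [normSq_rkStep A b x hx hrows i y]
      have hs : normSq (A i) ≠ 0 := ne_of_gt (normSq_pos (hrows i))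
      field_simp
    rw [Finset.sum_congr rfl fun i _ => this i, Finset.sum_sub_distrib,
      ← Finset.sum_div, ← Finset.sum_div, ← Finset.sum_mul, ← frobSq_eq_sum_normSq,
      normSq_mulVec]
    field_simp
  rw [hsum]
  have hspec := spectral_bound A hrank σmin hσ (y - x)
  have h4 : σmin ^ 2 * normSq (y - x) / frobSq A ≤ normSq (A.mulVec (y - x)) / frobSq A :=
    div_le_div_of_nonneg_right hspec hF.le
  have h5 : σmin ^ 2 / frobSq A * normSq (y - x) = σmin ^ 2 * normSq (y - x) / frobSq A := by
    ring
  linarith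

/-! ### Expectation lemmas -/

lemma rkExp_mono {m n : ℕ} (A : Matrix (Fin m) (Fin n) ℝ) (b : Fin m → ℝ) (x0 : Fin n → ℝ)
    (k : ℕ) : ∀ f g : (Fin n → ℝ) → ℝ, (∀ y, f y ≤ g y) →
    rkExp A b x0 k f ≤ rkExp A b x0 k g := by
  induction k with
  | zero => intro f g h; exact h x0
  | succ k ih =>
    intro f g h
    apply ih
    intro y
    apply Finset.sum_le_sum
    intro i _
    exact mul_le_mul_of_nonneg_left (h _) (div_nonneg (normSq_nonneg _) (frobSq_nonneg A))

lemma rkExp_const_mul {m n : ℕ} (A : Matrix (Fin m) (Fin n) ℝ) (b : Fin m → ℝ) (x0 : Fin n → ℝ)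
    (k : ℕ) (c : ℝ) : ∀ f : (Fin n → ℝ) → ℝ,
    rkExp A b x0 k (fun y => c * f y) = c * rkExp A b x0 k f := by
  induction k with
  | zero => intro f; rfl
  | succ k ih =>
    intro f
    show rkExp A b x0 k _ = c * rkExp A b x0 k _
    rw [← ih]
    congr 1
    funext y
    rw [Finset.mul_sum]
    exact Finset.sum_congr rfl fun i _ => by ring

/-- **Theorem 1.1 (Strohmer–Vershynin).** For a consistent system `Ax = b` with `A` of full
column rank and unique solution `x`, the RK iterates from any `x₀` satisfy
`𝔼‖x_k − x‖² ≤ (1 − σ_min²/‖A‖_F²)^k ‖x₀ − x‖²`. -/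
theorem rk_strohmer_vershynin {m n : ℕ}
    (A : Matrix (Fin m) (Fin n) ℝ) (b : Fin m → ℝ)
    (hA : A ≠ 0) (hrows : ∀ i, A i ≠ 0)
    (hrank : ∀ v : Fin n → ℝ, A.mulVec v = 0 → v = 0)
    (σmin : ℝ) (hσ : IsSmallestNonzeroSingularValue A σmin)
    (x : Fin n → ℝ) (hx : A.mulVec x = b)
    (x0 : Fin n → ℝ) (k : ℕ) :
    rkExp A b x0 k (fun y => normSq (y - x)) ≤
      (1 - σmin ^ 2 / frobSq A) ^ k * normSq (x0 - x) := by
  have hF : 0 < frobSq A := frobSq_pos hrows hA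
  -- the contraction factor is nonnegative
  have hr : 0 ≤ 1 - σmin ^ 2 / frobSq A := by
    obtain ⟨hσpos, ⟨v, hv, hveq⟩, _⟩ := hσ
    have h1 : dot ((Aᵀ * A).mulVec v) v = σmin ^ 2 * normSq v := by
      rw [hveq]
      simp only [dot, normSq, Pi.smul_apply, smul_eq_mul, Finset.mul_sum]
      exact Finset.sum_congr rfl fun i _ => by ring
    rw [dot_gram, dot_self] at h1
    -- Cauchy–Schwarz rowwise: ‖Av‖² ≤ frobSq A * ‖v‖²
    have h2 : normSq (A.mulVec v) ≤ frobSq A * normSq v := by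
      rw [normSq_mulVec, frobSq_eq_sum_normSq, Finset.sum_mul]
      apply Finset.sum_le_sum
      intro i _
      exact Finset.sum_mul_sq_le_sq_mul_sq Finset.univ (A i) v
    have hvpos := normSq_pos hv
    have h3 : σmin ^ 2 ≤ frobSq A := by nlinarith
    have := div_le_one_of_le₀ h3 (le_of_lt hF)
    linarith
  induction k with
  | zero => simp [rkExp]
  | succ k ih =>
    show rkExp A b x0 k _ ≤ _
    calc rkExp A b x0 k
          (fun y => ∑ i, normSq (A i) / frobSq A * normSq (rkStep A b i y - x))
        ≤ rkExp A b x0 k (fun y => (1 - σmin ^ 2 / frobSq A) * normSq (y - x)) := by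
          apply rkExp_mono
          intro y
          exact one_step_bound A b hA hrows hrank σmin hσ x hx y
      _ = (1 - σmin ^ 2 / frobSq A) * rkExp A b x0 k (fun y => normSq (y - x)) :=
          rkExp_const_mul A b x0 k _ _
      _ ≤ (1 - σmin ^ 2 / frobSq A) * ((1 - σmin ^ 2 / frobSq A) ^ k * normSq (x0 - x)) :=
          mul_le_mul_of_nonneg_left ih hr
      _ = (1 - σmin ^ 2 / frobSq A) ^ (k + 1) * normSq (x0 - x) := by ring

end RK
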